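/- Let d, e ∈ ℝ. There exist real numbers x₁, x₂, x₃ satisfying x₁ + x₂ + x₃ = 0, x₁² + x₂² + x₃² = d, and x₁³ + x₂³ + x₃³ = e if and only if d³ ≥ 6e². -/
import Mathlib


theorem stmt_0 (d e : ℝ) :
    (∃ x₁ x₂ x₃ : ℝ, x₁ + x₂ + x₃ = 0 ∧ x₁ ^ 2 + x₂ ^ 2 + x₃ ^ 2 = d ∧
      x₁ ^ 3 + x₂ ^ 3 + x₃ ^ 3 = e) ↔ d ^ 3 ≥ 6 * e ^ 2 := by
  constructor
  · rintro ⟨a, b, c, h1, h2, h3⟩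
    have hc : c = -a - b := by linarith
    subst hc
    subst h2; subst h3
    nlinarith [sq_nonneg ((a-b)*(a+2*b)*(2*a+b))]
  · intro h
    have hd : 0 ≤ d := by
      by_contra h'
      push_neg at h'
      nlinarith [sq_nonneg e, mul_pos (mul_pos (neg_pos.mpr h') (neg_pos.mpr h')) (neg_pos.mpr h')]
    set t₀ : ℝ := Real.sqrt (2*d/3) with ht₀
    have ht₀sq : t₀ ^ 2 = 2*d/3 := Real.sq_sqrt (by linarith)
    have ht₀nn : 0 ≤ t₀ := Real.sqrt_nonneg _
    set f : ℝ → ℝ := fun t => 3*t^3 - (3/2)*d*t with hf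
    have hcont : ContinuousOn f (Set.Icc (-t₀) t₀) := by
      apply Continuous.continuousOn; continuity
    have hft₀ : f t₀ = t₀ * d / 2 := by
      simp only [hf]; nlinarith [ht₀sq]
    have hfneg : f (-t₀) = -(t₀ * d / 2) := by
      simp only [hf]; nlinarith [ht₀sq]
    have hsq : (t₀ * d / 2) ^ 2 = d ^ 3 / 6 := by linear_combination (d^2/4) * ht₀sq
    have hbnd : e ^ 2 ≤ (t₀ * d / 2) ^ 2 := by linarith
    have h0 : 0 ≤ t₀ * d / 2 := by positivity
    have habs : |e| ≤ t₀ * d / 2 := by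
      rw [abs_le]
      constructor <;> nlinarith [hbnd, h0]
    have hmem : e ∈ Set.Icc (f (-t₀)) (f t₀) := by
      rw [hft₀, hfneg]
      constructor <;> cases abs_le.mp habs <;> linarith
    obtain ⟨t, htmem, htval⟩ := intermediate_value_Icc (by linarith) hcont hmem
    obtain ⟨ht1, ht2⟩ := htmem
    have htsq : 3 * t ^ 2 ≤ 2 * d := by nlinarith [ht₀sq]
    set s : ℝ := Real.sqrt (2*d - 3*t^2) with hs
    have hssq : s ^ 2 = 2*d - 3*t^2 := Real.sq_sqrt (by linarith)
    refine ⟨(-t+s)/2, (-t-s)/2, t, by ring, ?_, ?_⟩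
    · linear_combination hssq / 2
    · have ht : 3*t^3 - (3/2)*d*t = e := htval
      linear_combination ht - (3*t/4) * hssq
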